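/- Let d₀, d₁ : S × A → ℝ be strictly positive with state marginals d_i(s) = Σ_a d_i(s,a), and set π_i(a|s) = d_i(s,a)/d_i(s). For α ∈ [0,1] let d_α(s) = α d₁(s) + (1−α) d₀(s) and π_α(a|s) = (α d₁(s,a) + (1−α) d₀(s,a))/d_α(s). Then the following identity holds: (1/2) Σ_s [ α d₁(s) (Σ_a |π₁(a|s) − π_α(a|s)|)² + (1−α) d₀(s) (Σ_a |π₀(a|s) − π_α(a|s)|)² ] = (α(1−α)/2) Σ_s (d₀(s) d₁(s)/d_α(s)) (Σ_a |π₁(a|s) − π₀(a|s)|)². -/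

import Mathlib

open Finset

/-- the weighted ℓ₁ deviations of the conditionals from the mixture
conditional satisfy the identity
`(1/2) Σ_s [α d₁(s)(Σ_a|π₁−π_α|)² + (1−α) d₀(s)(Σ_a|π₀−π_α|)²]
  = (α(1−α)/2) Σ_s (d₀(s)d₁(s)/d_α(s)) (Σ_a|π₁−π₀|)²`. -/
theorem mixture_conditional_l1_identity
    {S A : Type*} [Fintype S] [Fintype A] [Nonempty S] [Nonempty A]
    (d₀ d₁ : S → A → ℝ) (hd₀ : ∀ s a, 0 < d₀ s a) (hd₁ : ∀ s a, 0 < d₁ s a)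
    (α : ℝ) (hα0 : 0 ≤ α) (hα1 : α ≤ 1)
    (π₀ π₁ πα : S → A → ℝ)
    (hπ₀ : ∀ s a, π₀ s a = d₀ s a / ∑ a', d₀ s a')
    (hπ₁ : ∀ s a, π₁ s a = d₁ s a / ∑ a', d₁ s a')
    (dαs : S → ℝ)
    (hdαs : ∀ s, dαs s = α * (∑ a, d₁ s a) + (1 - α) * (∑ a, d₀ s a))
    (hπα : ∀ s a, πα s a = (α * d₁ s a + (1 - α) * d₀ s a) / dαs s) :
    1 / 2 * ∑ s, (α * (∑ a, d₁ s a) * (∑ a, |π₁ s a - πα s a|) ^ 2 +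
        (1 - α) * (∑ a, d₀ s a) * (∑ a, |π₀ s a - πα s a|) ^ 2) =
      α * (1 - α) / 2 * ∑ s, ((∑ a, d₀ s a) * (∑ a, d₁ s a) / dαs s) *
        (∑ a, |π₁ s a - π₀ s a|) ^ 2 := by
  have hα1' : (0:ℝ) ≤ 1 - α := by linarith
  have key : ∀ s, α * (∑ a, d₁ s a) * (∑ a, |π₁ s a - πα s a|) ^ 2 +
      (1 - α) * (∑ a, d₀ s a) * (∑ a, |π₀ s a - πα s a|) ^ 2 =
      α * (1 - α) * (((∑ a, d₀ s a) * (∑ a, d₁ s a) / dαs s) *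
        (∑ a, |π₁ s a - π₀ s a|) ^ 2) := by
    intro s
    set D0 := ∑ a, d₀ s a with hD0def
    set D1 := ∑ a, d₁ s a with hD1def
    have hD0 : 0 < D0 := Finset.sum_pos (fun a _ => hd₀ s a) Finset.univ_nonempty
    have hD1 : 0 < D1 := Finset.sum_pos (fun a _ => hd₁ s a) Finset.univ_nonempty
    have hDα : 0 < dαs s := by
      rw [hdαs]
      nlinarith [mul_nonneg hα0 hD1.le, mul_nonneg hα1' hD0.le]
    have hDα' : α * (∑ a, d₁ s a) + (1 - α) * (∑ a, d₀ s a) ≠ 0 := by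
      rw [← hdαs]; exact hDα.ne'
    set T := ∑ a, |D0 * d₁ s a - D1 * d₀ s a| with hTdef
    have h1 : ∑ a, |π₁ s a - πα s a| = (1 - α) / (D1 * dαs s) * T := by
      rw [hTdef, Finset.mul_sum]
      refine Finset.sum_congr rfl fun a _ => ?_
      have e : π₁ s a - πα s a =
          ((1 - α) * (D0 * d₁ s a - D1 * d₀ s a)) / (D1 * dαs s) := by
        rw [hπ₁, hπα, hdαs, ← hD0def, ← hD1def]
        have hne : α * D1 + (1 - α) * D0 ≠ 0 := hDα'
        rw [div_sub_div _ _ hD1.ne' hne, div_eq_div_iff (mul_ne_zero hD1.ne' hne) (mul_ne_zero hD1.ne' hne)]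
        ring
      rw [e, abs_div, abs_mul, abs_of_nonneg hα1',
        abs_of_pos (mul_pos hD1 hDα)]
      ring
    have h0 : ∑ a, |π₀ s a - πα s a| = α / (D0 * dαs s) * T := by
      rw [hTdef, Finset.mul_sum]
      refine Finset.sum_congr rfl fun a _ => ?_
      have e : π₀ s a - πα s a =
          (α * (D1 * d₀ s a - D0 * d₁ s a)) / (D0 * dαs s) := by
        rw [hπ₀, hπα, hdαs, ← hD0def, ← hD1def]
        have hne : α * D1 + (1 - α) * D0 ≠ 0 := hDα'
        rw [div_sub_div _ _ hD0.ne' hne, div_eq_div_iff (mul_ne_zero hD0.ne' hne) (mul_ne_zero hD0.ne' hne)]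
        ring
      rw [e, abs_div, abs_mul, abs_of_nonneg hα0,
        abs_of_pos (mul_pos hD0 hDα)]
      rw [abs_sub_comm]
      ring
    have hT : ∑ a, |π₁ s a - π₀ s a| = 1 / (D0 * D1) * T := by
      rw [hTdef, Finset.mul_sum]
      refine Finset.sum_congr rfl fun a _ => ?_
      have e : π₁ s a - π₀ s a =
          (D0 * d₁ s a - D1 * d₀ s a) / (D0 * D1) := by
        rw [hπ₀, hπ₁, ← hD0def, ← hD1def]
        field_simp [hD0.ne', hD1.ne', hDα']
      rw [e, abs_div, abs_of_pos (mul_pos hD0 hD1)]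
      ring
    rw [h1, h0, hT, hdαs]
    rw [hdαs] at hDα
    field_simp [hD0.ne', hD1.ne', hDα']
    ring
  rw [Finset.sum_congr rfl (fun s _ => key s), ← Finset.mul_sum]
  ring
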